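/- Let φ : [0, T) → ℝ be locally Lipschitz and nonnegative, and let c₁, c₂ > 0. Suppose for almost every t ∈ [0, T): if φ(t) ≥ c₁·min{1, 1/t} then φ'(t) ≤ −c₂·φ(t)². Then there is a constant c (depending on c₁, c₂, φ(0)) such that φ(t) ≤ c·min{1, 1/t} for all t ∈ (0, T). -/

import Mathlib

open MeasureTheory Set ENNReal

open Filter Topology in
/-- A Lipschitz function whose right upper slope is a.e. nonpositive is nonincreasing. -/
lemma aux_decay {h : ℝ → ℝ} {L : NNReal} {a b : ℝ} (hab : a ≤ b)
    (hL : LipschitzOnWith L h (Set.Icc a b)) {N : Set ℝ} (hN : volume N = 0)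
    (key : ∀ t ∈ Set.Ico a b, t ∉ N → ∀ δ : ℝ, 0 < δ →
      ∀ᶠ u in 𝓝[>] t, h u ≤ h t + δ * (u - t)) :
    h b ≤ h a := by
  refine le_of_forall_pos_le_add fun ε εpos => ?_
  have hba1 : (0:ℝ) < b - a + 1 := by linarith
  set K : ℝ := (L : ℝ) + 1 with hKdef
  have hK0 : (0:ℝ) < K := by positivity
  set δ : ℝ := ε / (2 * (b - a + 1)) with hδdef
  have hδ : 0 < δ := by positivity
  -- choose an open superset of `N` of small measure
  have hlt : volume N < ENNReal.ofReal (ε / (2 * K)) := by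
    rw [hN]; exact ENNReal.ofReal_pos.2 (by positivity)
  obtain ⟨U, hNU, hUopen, hUvol⟩ := Set.exists_isOpen_lt_of_lt N _ hlt
  have hUfin : volume U ≠ ⊤ := (hUvol.trans ENNReal.ofReal_lt_top).ne
  set m : ℝ → ℝ := fun t => (volume (U ∩ Set.Ioc a t)).toReal with hmdef
  have hfin : ∀ t u : ℝ, volume (U ∩ Set.Ioc t u) ≠ ⊤ :=
    fun t u => ne_top_of_le_ne_top hUfin (measure_mono inter_subset_left)
  have hma : m a = 0 := by simp [hmdef]
  have hmono : ∀ t u : ℝ, t ≤ u → m t ≤ m u := by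
    intro t u htu
    exact ENNReal.toReal_mono (hfin a u)
      (measure_mono (inter_subset_inter_right _ (Set.Ioc_subset_Ioc_right htu)))
  have hadd : ∀ t u : ℝ, a ≤ t → t ≤ u →
      m u - m t = (volume (U ∩ Set.Ioc t u)).toReal := by
    intro t u hat htu
    have hsplit : Set.Ioc a u = Set.Ioc a t ∪ Set.Ioc t u := (Set.Ioc_union_Ioc_eq_Ioc hat htu).symm
    have : volume (U ∩ Set.Ioc a u) = volume (U ∩ Set.Ioc a t) + volume (U ∩ Set.Ioc t u) := by
      rw [hsplit, Set.inter_union_distrib_left]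
      exact measure_union ((Set.Ioc_disjoint_Ioc_of_le le_rfl).mono inter_subset_right inter_subset_right)
        (hUopen.measurableSet.inter measurableSet_Ioc)
    simp only [hmdef, this, ENNReal.toReal_add (hfin a t) (hfin t u)]
    ring
  have hub : ∀ t u : ℝ, t ≤ u → (volume (U ∩ Set.Ioc t u)).toReal ≤ u - t := by
    intro t u htu
    refine ENNReal.toReal_le_of_le_ofReal (by linarith) ?_
    calc volume (U ∩ Set.Ioc t u) ≤ volume (Set.Ioc t u) := measure_mono inter_subset_right
      _ = ENNReal.ofReal (u - t) := Real.volume_Ioc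
  have hslope : ∀ t u : ℝ, t ≤ u → m u - m t ≤ u - t := by
    intro t u htu
    rcases le_or_gt a t with hat | hta
    · rw [hadd t u hat htu]; exact hub t u htu
    · rcases le_or_gt u a with hua | hau
      · have h1 : m t = 0 := by simp [hmdef, Set.Ioc_eq_empty (not_lt.2 hta.le)]
        have h2 : m u = 0 := by simp [hmdef, Set.Ioc_eq_empty (not_lt.2 hua)]
        rw [h1, h2]; linarith
      · have h1 : m t = 0 := by simp [hmdef, Set.Ioc_eq_empty (not_lt.2 hta.le)]
        rw [h1, sub_zero]
        have := hadd a u le_rfl hau.le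
        rw [hma, sub_zero] at this
        rw [this]
        have := hub a u hau.le
        linarith
  have hmcont : Continuous m := by
    refine (LipschitzWith.of_dist_le_mul (K := 1) fun t u => ?_).continuous
    rw [Real.dist_eq, Real.dist_eq, NNReal.coe_one, one_mul]
    rcases le_total t u with htu | hut
    · rw [abs_sub_comm, abs_of_nonneg (by linarith [hmono t u htu]),
        abs_of_nonpos (by linarith)]
      have := hslope t u htu; linarith
    · rw [abs_of_nonneg (by linarith [hmono u t hut]), abs_of_nonneg (by linarith)]
      exact hslope u t hut
  set F : ℝ → ℝ := fun t => h t - K * m t - δ * (t - a) with hFdef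
  have hFcont : ContinuousOn F (Set.Icc a b) :=
    (hL.continuousOn.sub ((continuous_const.mul hmcont).continuousOn)).sub
      (Continuous.continuousOn (by continuity))
  have s_closed : IsClosed ({t | F t ≤ F a} ∩ Set.Icc a b) := by
    have := hFcont.preimage_isClosed_of_isClosed isClosed_Icc (isClosed_Iic (a := F a))
    convert this using 1
    ext t; constructor
    · rintro ⟨h1, h2⟩; exact ⟨h2, h1⟩
    · rintro ⟨h1, h2⟩; exact ⟨h2, h1⟩
  have main : Set.Icc a b ⊆ {t | F t ≤ F a} := by
    refine s_closed.Icc_subset_of_forall_exists_gt (le_refl (F a)) ?_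
    rintro t ⟨htF, hta, htb⟩ v htv
    rcases Classical.em (t ∈ U) with htU | htU
    · -- inside the open set `U`: use the Lipschitz bound and full measure growth of `m`
      obtain ⟨η, hη, hball⟩ := Metric.isOpen_iff.1 hUopen t htU
      obtain ⟨z, hz1, hz2⟩ : ∃ z, t < z ∧ z < min (min v b) (t + η) := by
        refine exists_between (lt_min (lt_min htv htb) (by linarith))
      have hzv : z ≤ v := le_of_lt (lt_of_lt_of_le hz2 (le_trans (min_le_left _ _) (min_le_left _ _)))
      have hzb : z ≤ b := le_of_lt (lt_of_lt_of_le hz2 (le_trans (min_le_left _ _) (min_le_right _ _)))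
      have hzη : z < t + η := lt_of_lt_of_le hz2 (min_le_right _ _)
      have hsub : Set.Ioc t z ⊆ U := by
        intro w hw
        apply hball
        rw [Metric.mem_ball, Real.dist_eq, abs_of_pos (by linarith [hw.1])]
        linarith [hw.2]
      have hmz : m z - m t = z - t := by
        rw [hadd t z hta hz1.le, Set.inter_eq_self_of_subset_right hsub, Real.volume_Ioc,
          ENNReal.toReal_ofReal (by linarith)]
      have hhz : h z - h t ≤ (L : ℝ) * (z - t) := by
        have hd := hL.dist_le_mul z ⟨hta.trans hz1.le, hzb⟩ t ⟨hta, htb.le⟩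
        have habs : dist z t = z - t := by
          rw [Real.dist_eq]; exact abs_of_pos (by linarith)
        rw [Real.dist_eq, habs] at hd
        exact (le_abs_self _).trans hd
      refine ⟨z, ?_, hz1, hzv⟩
      have hFzt : F z ≤ F t := by
        simp only [hFdef]
        have e1 : K * m z - K * m t = K * (z - t) := by rw [← mul_sub, hmz]
        have e2 : δ * (z - a) - δ * (t - a) = δ * (z - t) := by ring
        have e3 : K * (z - t) = (L : ℝ) * (z - t) + (z - t) := by rw [hKdef]; ring
        have e4 : 0 < δ * (z - t) := mul_pos hδ (by linarith)
        linarith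
      exact hFzt.trans htF
    · -- outside `U`: use the a.e. slope bound
      have htN : t ∉ N := fun hc => htU (hNU hc)
      have h1 := key t ⟨hta, htb⟩ htN δ hδ
      have h2 : Set.Ioo t (min v b) ∈ 𝓝[>] t := Ioo_mem_nhdsGT (lt_min htv htb)
      obtain ⟨z, hz1, hz2⟩ := (h1.and (eventually_of_mem h2 (fun x hx => hx))).exists
      refine ⟨z, ?_, hz2.1, le_of_lt (lt_of_lt_of_le hz2.2 (min_le_left _ _))⟩
      have hmm : 0 ≤ m z - m t := by linarith [hmono t z hz2.1.le]
      have hFzt : F z ≤ F t := by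
        simp only [hFdef]
        have e1 : K * m z - K * m t = K * (m z - m t) := by ring
        have e2 : δ * (z - a) - δ * (t - a) = δ * (z - t) := by ring
        have e4 : 0 ≤ K * (m z - m t) := mul_nonneg hK0.le hmm
        linarith
      exact hFzt.trans htF
  have hFb : F b ≤ F a := main ⟨hab, le_rfl⟩
  simp only [hFdef, hma, sub_self, mul_zero, sub_zero] at hFb
  -- bound the error terms
  have hmb : K * m b ≤ ε / 2 := by
    have h1 : m b ≤ (volume U).toReal :=
      ENNReal.toReal_mono hUfin (measure_mono inter_subset_left)
    have h2 : (volume U).toReal < ε / (2 * K) := by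
      rw [← ENNReal.ofReal_toReal hUfin] at hUvol
      exact_mod_cast (ENNReal.ofReal_lt_ofReal_iff (by positivity)).1 hUvol
    have : m b ≤ ε / (2 * K) := by linarith
    calc K * m b ≤ K * (ε / (2 * K)) := by nlinarith
      _ = ε / 2 := by field_simp
  have hδb : δ * (b - a) ≤ ε / 2 := by
    rw [hδdef]
    rw [div_mul_eq_mul_div, div_le_div_iff₀ (by positivity) (by norm_num)]
    nlinarith
  clear_value K δ m F
  linarith

open Filter Topology in
lemma aux_slope {g : ℝ → ℝ} {t G δ : ℝ} (hg : HasDerivAt g G t) (hG : G < δ) :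
    ∀ᶠ u in 𝓝[>] t, g u ≤ g t + δ * (u - t) := by
  have h1 : Tendsto (slope g t) (𝓝[≠] t) (𝓝 G) := hasDerivAt_iff_tendsto_slope.1 hg
  have h2 : ∀ᶠ u in 𝓝[≠] t, slope g t u < δ := h1.eventually (eventually_lt_nhds hG) |>.mono
    (fun u hu => hu)
  have h3 : (𝓝[>] t) ≤ 𝓝[≠] t :=
    nhdsWithin_mono t (fun u hu => Set.mem_compl_singleton_iff.2 (ne_of_gt hu))
  filter_upwards [h2.filter_mono h3, self_mem_nhdsWithin] with u hu1 hu2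
  rw [slope_def_field] at hu1
  have hut : 0 < u - t := sub_pos.2 hu2
  rw [div_lt_iff₀ hut] at hu1
  linarith

open Filter Topology in
/-- If nonnegative locally Lipschitz `φ` satisfies `φ' ≤ −c₂ φ²` (a.e.) whenever
`φ(t) ≥ c₁ min{1, 1/t}`, then `φ(t) ≤ c · min{1, 1/t}` on `(0,T)`, `T ∈ (0,∞]`. -/
theorem stmt_9 (T : ℝ≥0∞) (hT : 0 < T) (φ : ℝ → ℝ) (c₁ c₂ : ℝ)
    (hc₁ : 0 < c₁) (hc₂ : 0 < c₂)
    (hlip : ∀ K : Set ℝ, IsCompact K → K ⊆ {t : ℝ | 0 ≤ t ∧ ENNReal.ofReal t < T} →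
      ∃ C : NNReal, LipschitzOnWith C φ K)
    (hpos : ∀ t : ℝ, 0 ≤ t → ENNReal.ofReal t < T → 0 ≤ φ t)
    (hode : ∀ᵐ t ∂(volume.restrict {t : ℝ | 0 ≤ t ∧ ENNReal.ofReal t < T}),
      DifferentiableAt ℝ φ t ∧
        (c₁ * min 1 (1 / t) ≤ φ t → deriv φ t ≤ -c₂ * φ t ^ 2)) :
    ∃ c : ℝ, 0 < c ∧ ∀ t : ℝ, 0 < t → ENNReal.ofReal t < T →
      φ t ≤ c * min 1 (1 / t) := by
  set S : Set ℝ := {t : ℝ | 0 ≤ t ∧ ENNReal.ofReal t < T} with hSdef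
  have hSmeas : MeasurableSet S := by
    have : S = Set.Ici (0:ℝ) ∩ ENNReal.ofReal ⁻¹' (Set.Iio T) := by
      ext t; simp [hSdef, Set.mem_Ici]
    rw [this]
    exact measurableSet_Ici.inter (ENNReal.continuous_ofReal.measurable measurableSet_Iio)
  have hae : ∀ᵐ t ∂(volume : Measure ℝ), t ∈ S → (DifferentiableAt ℝ φ t ∧
      (c₁ * min 1 (1 / t) ≤ φ t → deriv φ t ≤ -c₂ * φ t ^ 2)) :=
    (ae_restrict_iff' hSmeas).1 hode
  have hN₀ : volume {t : ℝ | ¬ (t ∈ S → (DifferentiableAt ℝ φ t ∧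
      (c₁ * min 1 (1 / t) ≤ φ t → deriv φ t ≤ -c₂ * φ t ^ 2)))} = 0 := ae_iff.1 hae
  set N₀ : Set ℝ := {t : ℝ | ¬ (t ∈ S → (DifferentiableAt ℝ φ t ∧
      (c₁ * min 1 (1 / t) ≤ φ t → deriv φ t ≤ -c₂ * φ t ^ 2)))} with hN₀def
  -- the constant
  obtain ⟨c, hcdef⟩ : ∃ c : ℝ, c = max (max c₁ c₂⁻¹) (φ 0) + 1 := ⟨_, rfl⟩
  have hcc₁ : c₁ ≤ c := by
    have h1 := le_max_left c₁ c₂⁻¹; have h2 := le_max_left (max c₁ c₂⁻¹) (φ 0)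
    linarith [hcdef]
  have hc0 : 0 < c := lt_of_lt_of_le hc₁ hcc₁
  have hcc₂ : c ≤ c₂ * c ^ 2 := by
    have h1 : c₂⁻¹ ≤ c := by
      have h3 := le_max_right c₁ c₂⁻¹; have h4 := le_max_left (max c₁ c₂⁻¹) (φ 0)
      linarith [hcdef]
    have h2 : 1 ≤ c₂ * c := by
      have h3 := mul_le_mul_of_nonneg_left h1 hc₂.le
      rwa [mul_inv_cancel₀ hc₂.ne'] at h3
    nlinarith [mul_le_mul_of_nonneg_right h2 hc0.le]
  have hcφ : φ 0 < c := by
    have h1 := le_max_right (max c₁ c₂⁻¹) (φ 0); linarith [hcdef]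
  refine ⟨c, hc0, ?_⟩
  intro b hb hbT
  set ψ : ℝ → ℝ := fun t => c / max t 1 with hψdef
  set h : ℝ → ℝ := fun t => max (φ t - ψ t) 0 with hhdef
  have hIccS : Set.Icc 0 b ⊆ S := fun t ht =>
    ⟨ht.1, lt_of_le_of_lt (ENNReal.ofReal_le_ofReal ht.2) hbT⟩
  obtain ⟨C, hC⟩ := hlip (Set.Icc 0 b) isCompact_Icc hIccS
  -- ψ is Lipschitz
  have hψlip : LipschitzWith (Real.toNNReal c) ψ := by
    refine LipschitzWith.of_dist_le_mul fun u t => ?_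
    have hu1 : (1:ℝ) ≤ max u 1 := le_max_right _ _
    have ht1 : (1:ℝ) ≤ max t 1 := le_max_right _ _
    rw [Real.dist_eq, Real.dist_eq, Real.coe_toNNReal _ hc0.le]
    have e : ψ u - ψ t = c * ((max t 1 - max u 1) / (max u 1 * max t 1)) := by
      simp only [hψdef]
      field_simp
    have hd : (0:ℝ) ≤ max u 1 * max t 1 := by positivity
    have e2 : |(max t 1 - max u 1) / (max u 1 * max t 1)| =
        |max t 1 - max u 1| / (max u 1 * max t 1) := by
      rw [abs_div, abs_of_nonneg hd]
    rw [e, abs_mul, abs_of_nonneg hc0.le, e2]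
    have h1 : |max t 1 - max u 1| ≤ |t - u| := abs_max_sub_max_le_abs _ _ _
    have h2 : (1:ℝ) ≤ max u 1 * max t 1 := by nlinarith
    have h3 : |max t 1 - max u 1| / (max u 1 * max t 1) ≤ |max t 1 - max u 1| :=
      div_le_self (abs_nonneg _) h2
    have h4 : |t - u| = |u - t| := abs_sub_comm _ _
    have h5 : |max t 1 - max u 1| / (max u 1 * max t 1) ≤ |u - t| := by
      rw [← h4]; exact h3.trans h1
    exact mul_le_mul_of_nonneg_left h5 hc0.le
  -- h is Lipschitz on [0, b]
  have hhlip : LipschitzOnWith (C + Real.toNNReal c) h (Set.Icc 0 b) := by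
    refine LipschitzOnWith.of_dist_le_mul fun u hu t ht => ?_
    have h1 := hC.dist_le_mul u hu t ht
    have h2 := hψlip.dist_le_mul u t
    have hcoe : ((Real.toNNReal c : NNReal) : ℝ) = c := Real.coe_toNNReal _ hc0.le
    rw [Real.dist_eq, Real.dist_eq] at h1 h2
    rw [hcoe] at h2
    have h3 : |h u - h t| ≤ |(φ u - ψ u) - (φ t - ψ t)| := abs_max_sub_max_le_abs _ _ _
    have h4 : |(φ u - ψ u) - (φ t - ψ t)| ≤ |φ u - φ t| + |ψ u - ψ t| := by
      have e : (φ u - ψ u) - (φ t - ψ t) = (φ u - φ t) - (ψ u - ψ t) := by ring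
      rw [e]; exact abs_sub _ _
    have h5 : ((C + Real.toNNReal c : NNReal) : ℝ) = (C : ℝ) + c := by
      push_cast [hcoe]
      ring
    rw [Real.dist_eq, Real.dist_eq, h5]
    have e3 : ((C : ℝ) + c) * |u - t| = (C : ℝ) * |u - t| + c * |u - t| := by ring
    linarith [le_abs_self (h u - h t)]
  -- ψ dominates the threshold
  have hψpos : ∀ t : ℝ, 0 ≤ t → c₁ * min 1 (1/t) ≤ ψ t := by
    intro t ht0
    have hmin0 : 0 ≤ min 1 (1/t) := le_min zero_le_one (one_div_nonneg.2 ht0)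
    have hmin1 : min 1 (1/t) ≤ 1 := min_le_left _ _
    rcases le_total t 1 with h1 | h1
    · have e : ψ t = c := by simp only [hψdef]; rw [max_eq_right h1, div_one]
      rw [e]
      have := mul_le_mul_of_nonneg_left hmin1 hc₁.le
      linarith
    · have ht0' : (0:ℝ) < t := lt_of_lt_of_le one_pos h1
      have e : ψ t = c / t := by simp only [hψdef]; rw [max_eq_left h1]
      have hmin : min 1 (1/t) = 1/t := min_eq_right (by rw [div_le_one ht0']; linarith)
      rw [e, hmin]
      have h2 := mul_le_mul_of_nonneg_right hcc₁ (one_div_nonneg.2 ht0'.le)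
      calc c₁ * (1/t) ≤ c * (1/t) := h2
        _ = c / t := by ring
  -- the key slope estimate
  have key : ∀ t ∈ Set.Ico 0 b, t ∉ (N₀ ∪ {1} : Set ℝ) → ∀ δ : ℝ, 0 < δ →
      ∀ᶠ u in 𝓝[>] t, h u ≤ h t + δ * (u - t) := by
    intro t ht htN δ hδ
    have htN₀ : t ∉ N₀ := fun hc => htN (Or.inl hc)
    have ht1 : t ≠ 1 := fun hc => htN (Or.inr (by simp [hc]))
    have htS : t ∈ S := hIccS ⟨ht.1, ht.2.le⟩
    have hQ : DifferentiableAt ℝ φ t ∧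
        (c₁ * min 1 (1 / t) ≤ φ t → deriv φ t ≤ -c₂ * φ t ^ 2) := by
      by_contra hcon
      exact htN₀ (fun himp => hcon (himp htS))
    obtain ⟨hdiff, hcond⟩ := hQ
    rcases lt_or_ge (φ t) (ψ t) with hlt | hge
    · -- below the barrier: h vanishes nearby
      have hφc : ContinuousAt φ t := hdiff.continuousAt
      have hψc : ContinuousAt ψ t := hψlip.continuous.continuousAt
      have hpos' : 0 < ψ t - φ t := by linarith
      have hev : ∀ᶠ u in 𝓝 t, 0 < ψ u - φ u :=
        (hψc.sub hφc).eventually (eventually_gt_nhds hpos')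
      filter_upwards [hev.filter_mono nhdsWithin_le_nhds, self_mem_nhdsWithin] with u hu1 hu2
      have hu0 : h u = 0 := by
        simp only [hhdef]; exact max_eq_right (by linarith)
      have hht : 0 ≤ h t := le_max_right _ _
      have hut : 0 < u - t := sub_pos.2 hu2
      rw [hu0]
      nlinarith [mul_pos hδ hut]
    · -- above the barrier: use the differential inequality
      have hφt : c₁ * min 1 (1/t) ≤ φ t := le_trans (hψpos t ht.1) hge
      have hD : deriv φ t ≤ -c₂ * φ t ^ 2 := hcond hφt
      have hDneg : deriv φ t ≤ 0 := le_trans hD (by nlinarith [sq_nonneg (φ t)])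
      obtain ⟨G, hg, hG⟩ : ∃ G : ℝ, HasDerivAt (fun u => φ u - ψ u) G t ∧ G < δ := by
        rcases lt_or_gt_of_ne ht1 with hlt1 | hgt1
        · refine ⟨deriv φ t - 0, ?_, by linarith⟩
          have hψev : ψ =ᶠ[𝓝 t] fun _ => c := by
            filter_upwards [Iio_mem_nhds hlt1] with u hu
            simp only [hψdef]
            rw [max_eq_right hu.le, div_one]
          exact hdiff.hasDerivAt.sub ((hasDerivAt_const t c).congr_of_eventuallyEq hψev)
        · have ht0 : (0:ℝ) < t := lt_trans one_pos hgt1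
          refine ⟨deriv φ t - (c * -(t^2)⁻¹), ?_, ?_⟩
          · have hinv : HasDerivAt (fun u : ℝ => c * u⁻¹) (c * -(t^2)⁻¹) t :=
              (hasDerivAt_inv ht0.ne').const_mul c
            have hψev : ψ =ᶠ[𝓝 t] fun u => c * u⁻¹ := by
              filter_upwards [Ioi_mem_nhds hgt1] with u hu
              simp only [hψdef]
              rw [max_eq_left hu.le, div_eq_mul_inv]
            exact hdiff.hasDerivAt.sub (hinv.congr_of_eventuallyEq hψev)
          · have hψt : ψ t = c / t := by simp only [hψdef]; rw [max_eq_left hgt1.le]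
            have hφct : c / t ≤ φ t := by rw [← hψt]; exact hge
            have h1 : (c/t)^2 ≤ φ t ^ 2 := by nlinarith [div_nonneg hc0.le ht0.le]
            have h2 : c / t^2 ≤ c₂ * φ t ^ 2 := by
              have h3 : c / t^2 ≤ (c₂ * c^2) / t^2 := by gcongr
              have h4 : c₂ * (c/t)^2 = (c₂ * c^2)/t^2 := by rw [div_pow]; ring
              have h5 : c₂ * (c/t)^2 ≤ c₂ * φ t ^ 2 := mul_le_mul_of_nonneg_left h1 hc₂.le
              linarith
            have e : c * -(t^2)⁻¹ = -(c / t^2) := by field_simp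
            rw [e]
            linarith
      filter_upwards [aux_slope hg hG, self_mem_nhdsWithin] with u hu1 hu2
      have hle : φ t - ψ t ≤ h t := le_max_left _ _
      have hht : 0 ≤ h t := le_max_right _ _
      have hut : 0 < u - t := sub_pos.2 hu2
      have hu0 : h u = max (φ u - ψ u) 0 := rfl
      rw [hu0]
      refine max_le ?_ ?_
      · linarith
      · nlinarith [mul_pos hδ hut]
  -- apply the decay lemma
  have hdecay : h b ≤ h 0 :=
    aux_decay hb.le hhlip (measure_union_null hN₀ (measure_singleton 1)) key
  have hh0 : h 0 = 0 := by
    simp only [hhdef, hψdef]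
    have e1 : max (0:ℝ) 1 = 1 := max_eq_right zero_le_one
    rw [e1, div_one]
    exact max_eq_right (by linarith)
  have hφb : φ b - ψ b ≤ 0 := by
    calc φ b - ψ b ≤ h b := le_max_left _ _
      _ ≤ h 0 := hdecay
      _ = 0 := hh0
  rcases le_total b 1 with hb1 | hb1
  · have e1 : ψ b = c := by simp only [hψdef]; rw [max_eq_right hb1, div_one]
    have e2 : min 1 (1/b) = 1 := min_eq_left (by rw [le_div_iff₀ hb]; linarith)
    rw [e2, mul_one]
    linarith [hφb, e1]
  · have e1 : ψ b = c / b := by simp only [hψdef]; rw [max_eq_left hb1]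
    have e2 : min 1 (1/b) = 1/b := min_eq_right (by rw [div_le_one hb]; linarith)
    rw [e2]
    have e3 : c * (1/b) = c / b := by ring
    rw [e3]
    linarith [hφb, e1]
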